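/- For every n > 0 there exists a set P of n points in ℝ^n such that for every k < n, any k-density clustering of P uses at least n − k + 1 centers. Concretely, P = {p_1,…,p_n} with p_i = √(1 − 2^{-i-1})·e_i works: for any center set C ⊆ P, letting c = p_i be the center of smallest index, every non-center point of P is strictly closer to c than to any other center. -/

import Mathlib

open scoped Classical

/-- for every `n > 0` the set `P = {p_1,…,p_n} ⊆ ℝ^n` with
`p_i = √(1 − 2^{-i-1})·e_i` has the property that any `k`-density clustering of `P`
(for `k < n`) uses at least `n − k + 1` centers. -/
theorem density_clustering_lower_bound (n : ℕ) (hn : 0 < n)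
    (p : Fin n → EuclideanSpace ℝ (Fin n))
    (hp : ∀ i : Fin n,
      p i = Real.sqrt (1 - (2 : ℝ) ^ (-((i : ℕ) : ℤ) - 2)) • EuclideanSpace.single i 1)
    (P : Finset (EuclideanSpace ℝ (Fin n))) (hP : P = Finset.image p Finset.univ) :
    P.card = n ∧
    ∀ k : ℕ, k < n → ∀ C ⊆ P,
      (∀ q ∈ P, ∃ c ∈ C, ∀ c' ∈ C, c' ≠ c → dist q c < dist q c') →
      (∀ c ∈ C,
        (P.filter fun q => ∀ c' ∈ C, c' ≠ c → dist q c < dist q c').card ≤ k) →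
      n - k + 1 ≤ C.card := by
  classical
  set t : Fin n → ℝ := fun i => (2 : ℝ) ^ (-((i : ℕ) : ℤ) - 2) with ht
  have ht0 : ∀ i, (0 : ℝ) < t i := fun i => zpow_pos (by norm_num) _
  have ht1 : ∀ i, t i < 1 := by
    intro i
    have : (-((i : ℕ) : ℤ) - 2) < 0 := by omega
    exact zpow_lt_one_of_neg₀ (by norm_num) this
  -- strict antitonicity of t
  have htmono : ∀ i j : Fin n, i < j → t j < t i := by
    intro i j hij
    apply zpow_lt_zpow_right₀ (by norm_num : (1:ℝ) < 2)
    have : (i : ℕ) < (j : ℕ) := hij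
    omega
  -- components of p
  have hcomp : ∀ i k : Fin n, p i k =
      if k = i then Real.sqrt (1 - t i) else 0 := by
    intro i k
    rw [hp i]
    simp [EuclideanSpace.single_apply, mul_comm, ht]
  -- injectivity
  have hinj : Function.Injective p := by
    intro i j hij
    by_contra hne
    have h1 : p i i = p j i := by rw [hij]
    rw [hcomp, hcomp, if_pos rfl, if_neg hne] at h1
    have : (0:ℝ) < Real.sqrt (1 - t i) := Real.sqrt_pos.mpr (by linarith [ht1 i])
    linarith [this, h1]
  -- distance formula
  have hdist : ∀ i j : Fin n, i ≠ j → dist (p i) (p j) ^ 2 = 2 - t i - t j := by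
    intro i j hij
    rw [EuclideanSpace.dist_eq, Real.sq_sqrt (Finset.sum_nonneg fun k _ => sq_nonneg _)]
    simp only [Real.dist_eq, sq_abs]
    have hz : ∀ k ∈ (Finset.univ : Finset (Fin n)), k ∉ ({i, j} : Finset (Fin n)) →
        (p i k - p j k) ^ 2 = 0 := by
      intro k _ hk
      simp only [Finset.mem_insert, Finset.mem_singleton, not_or] at hk
      rw [hcomp, hcomp, if_neg hk.1, if_neg hk.2]
      ring
    rw [← Finset.sum_subset (Finset.subset_univ ({i, j} : Finset (Fin n))) hz,
      Finset.sum_pair hij]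
    rw [hcomp, hcomp, hcomp, hcomp, if_pos rfl, if_pos rfl, if_neg hij,
      if_neg (Ne.symm hij)]
    have h1 : Real.sqrt (1 - t i) ^ 2 = 1 - t i :=
      Real.sq_sqrt (by linarith [ht1 i])
    have h2 : Real.sqrt (1 - t j) ^ 2 = 1 - t j :=
      Real.sq_sqrt (by linarith [ht1 j])
    nlinarith [h1, h2]
  -- comparison
  have hlt : ∀ j i i' : Fin n, j ≠ i → j ≠ i' → i < i' →
      dist (p j) (p i) < dist (p j) (p i') := by
    intro j i i' hji hji' hii'
    apply lt_of_pow_lt_pow_left₀ 2 dist_nonneg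
    rw [hdist j i hji, hdist j i' hji']
    have := htmono i i' hii'
    linarith
  have hPcard : P.card = n := by
    rw [hP, Finset.card_image_of_injective _ hinj, Finset.card_univ, Fintype.card_fin]
  refine ⟨hPcard, ?_⟩
  intro k hk C hC hnear hsize
  -- C is nonempty
  have hCne : C.Nonempty := by
    obtain ⟨c, hc, _⟩ := hnear (p ⟨0, hn⟩)
      (by rw [hP]; exact Finset.mem_image_of_mem _ (Finset.mem_univ _))
    exact ⟨c, hc⟩
  set I : Finset (Fin n) := Finset.univ.filter (fun i => p i ∈ C) with hI
  have hIne : I.Nonempty := by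
    obtain ⟨c, hc⟩ := hCne
    have hcP : c ∈ P := hC hc
    rw [hP] at hcP
    obtain ⟨i, _, rfl⟩ := Finset.mem_image.mp hcP
    exact ⟨i, by simp [hI, hc]⟩
  set i0 := I.min' hIne with hi0def
  have hi0 : p i0 ∈ C := (Finset.mem_filter.mp (I.min'_mem hIne)).2
  have hsub : insert (p i0) (P \ C) ⊆
      P.filter (fun q => ∀ c' ∈ C, c' ≠ p i0 → dist q (p i0) < dist q c') := by
    intro q hq
    rcases Finset.mem_insert.mp hq with rfl | hq
    · refine Finset.mem_filter.mpr ⟨hC hi0, ?_⟩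
      intro c' hc' hne
      rw [dist_self]
      exact dist_pos.mpr (Ne.symm hne)
    · obtain ⟨hqP, hqC⟩ := Finset.mem_sdiff.mp hq
      refine Finset.mem_filter.mpr ⟨hqP, ?_⟩
      intro c' hc' hne
      have hqP' := hqP
      rw [hP] at hqP'
      obtain ⟨j, _, rfl⟩ := Finset.mem_image.mp hqP'
      have hc'P := hC hc'
      rw [hP] at hc'P
      obtain ⟨i', _, rfl⟩ := Finset.mem_image.mp hc'P
      have hji0 : j ≠ i0 := fun h => hqC (h ▸ hi0)
      have hji' : j ≠ i' := fun h => hqC (h ▸ hc')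
      have hi'I : i' ∈ I := Finset.mem_filter.mpr ⟨Finset.mem_univ _, hc'⟩
      have hle : i0 ≤ i' := Finset.min'_le _ _ hi'I
      have hlt' : i0 < i' := lt_of_le_of_ne hle (fun h => hne (by rw [← h]))
      exact hlt j i0 i' hji0 hji' hlt'
  have hcard := Finset.card_le_card hsub
  have hnotmem : p i0 ∉ P \ C := by
    simp [Finset.mem_sdiff, hi0]
  have h1 : (insert (p i0) (P \ C)).card = (P \ C).card + 1 :=
    Finset.card_insert_of_notMem hnotmem
  have h2 : (P \ C).card = P.card - C.card := Finset.card_sdiff_of_subset hC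
  have h3 := hsize (p i0) hi0
  have hCn : C.card ≤ n := le_trans (Finset.card_le_card hC) (le_of_eq hPcard)
  omega
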